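/- The sequence a_n = (2n−1)!! (with a_0 = (−1)!! = 1) is gargantuan. -/

import Mathlib

open Filter Asymptotics Finset

/-- A real sequence `u` is *gargantuan* if `u (n-1) / u n → 0` and, for every `r ≥ 1`,
`∑_{k=r}^{n-r} |u k * u (n-k)| = O(u (n-r))` as `n → ∞`. -/
def Gargantuan (u : ℕ → ℝ) : Prop :=
  Tendsto (fun n => u (n - 1) / u n) atTop (nhds 0) ∧
    ∀ r : ℕ, 1 ≤ r →
      (fun n => ∑ k ∈ Finset.Icc r (n - r), |u k * u (n - k)|) =O[atTop]
        fun n => u (n - r)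

/-- The exponential `exp C` of a formal power series `C` (intended for `C` with zero
constant term): the coefficient of `X^n` is `∑_{k=0}^{n} [X^n] (C^k) / k!`. -/
noncomputable def expPS (C : PowerSeries ℝ) : PowerSeries ℝ :=
  PowerSeries.mk fun n =>
    ∑ k ∈ Finset.range (n + 1), (PowerSeries.coeff (R := ℝ) n (C ^ k)) / (Nat.factorial k)

noncomputable def aa (n : ℕ) : ℝ := (Nat.doubleFactorial (2 * n - 1) : ℝ)

lemma aa_pos (n : ℕ) : 0 < aa n := by
  unfold aa; exact_mod_cast Nat.doubleFactorial_pos _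

lemma aa_succ (n : ℕ) : aa (n + 1) = (2 * n + 1) * aa n := by
  unfold aa
  rcases n with _ | m
  · simp [Nat.doubleFactorial]
  · have h1 : 2 * (m + 1 + 1) - 1 = (2 * (m + 1) - 1) + 2 := by omega
    rw [h1, Nat.doubleFactorial_add_two]
    have h2 : 2 * (m + 1) - 1 + 2 = 2 * (m + 1) + 1 := by omega
    rw [h2]
    push_cast
    ring

lemma pair_ineq (r d m : ℕ) (h : 14 * r + 4 * d + 15 ≤ 6 * m) :
    (16 : ℝ) * ((2 * r + 2 * d + 3) * (2 * r + 1)) ≤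
      9 * ((2 * m + 1) * (2 * m + 2 * d + 3)) := by
  have h' : (14 * r + 4 * d + 15 : ℝ) ≤ 6 * m := by exact_mod_cast h
  nlinarith [sq_nonneg ((d : ℝ) + 1), sq_nonneg ((m : ℝ) - r), sq_nonneg ((m : ℝ) - r - d),
    sq_nonneg (2 * (m : ℝ) - 2 * r - 1 - (d : ℝ))]

lemma key : ∀ (d n r k : ℕ), k = r + d → 10 * (r + k) + 7 ≤ 6 * n →
    aa k * aa (n - k) ≤ aa r * aa (n - r) * (3 / 4 : ℝ) ^ d
  | 0, n, r, k, hk, _ => by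
    subst hk; simp
  | 1, n, r, k, hk, hn => by
    subst hk
    have hrn : r + 1 ≤ n := by omega
    have h1 : n - r = (n - (r + 1)) + 1 := by omega
    have h2 : n - (r + 1) = n - r - 1 := by omega
    rw [aa_succ r, h1, aa_succ (n - (r + 1))]
    set M := n - (r + 1) with hM
    have hnat : 4 * (2 * r + 1) ≤ 3 * (2 * M + 1) := by omega
    have hR : (4 : ℝ) * (2 * r + 1) ≤ 3 * (2 * M + 1) := by exact_mod_cast hnat
    have p1 := aa_pos r
    have p2 := aa_pos (n - (r + 1))
    rw [pow_one]
    have hm := mul_le_mul_of_nonneg_right hR (mul_pos p1 p2).le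
    linarith [hm]
  | (d + 2), n, r, k, hk, hn => by
    have hkn : k ≤ n := by omega
    have IH := key d n (r + 1) (k - 1) (by omega) (by omega)
    have e1 : k = (k - 1) + 1 := by omega
    have e2 : n - (k - 1) = (n - k) + 1 := by omega
    have e3 : n - r = (n - (r + 1)) + 1 := by omega
    rw [e2, aa_succ (n - k), aa_succ r] at IH
    have hB : ((n - (r + 1) : ℕ) : ℝ) = ((n - k : ℕ) : ℝ) + d + 1 := by
      have hh : (n - (r + 1)) = (n - k) + (d + 1) := by omega
      rw [hh]; push_cast; ring
    have ek : (2 * (k : ℝ) - 1) = 2 * r + 2 * d + 3 := by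
      have : (k : ℝ) = r + d + 2 := by exact_mod_cast hk
      linarith
    have pair : (16 : ℝ) * ((2 * (k : ℝ) - 1) * (2 * r + 1)) ≤
        9 * ((2 * ((n - k : ℕ) : ℝ) + 1) * (2 * ((n - (r + 1) : ℕ) : ℝ) + 1)) := by
      have h := pair_ineq r d (n - k) (by omega)
      have eb : (2 * ((n - (r + 1) : ℕ) : ℝ) + 1) = 2 * ((n - k : ℕ) : ℝ) + 2 * d + 3 := by
        rw [hB]; ring
      rw [ek, eb]
      exact h
    -- now combine
    conv_lhs => rw [e1, aa_succ (k - 1)]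
    rw [show n - (k - 1 + 1) = n - k from by omega]
    rw [e3, aa_succ (n - (r + 1))]
    have hck : (2 * (k - 1 : ℕ) + 1 : ℝ) = 2 * k - 1 := by
      have : ((k - 1 : ℕ) : ℝ) = (k : ℝ) - 1 := by rw [Nat.cast_sub (by omega)]; push_cast; ring
      rw [this]; ring
    rw [hck]
    have pA := aa_pos (k - 1)
    have pB := aa_pos (n - k)
    have pP := aa_pos r
    have pQ := aa_pos (n - (r + 1))
    have pX : (0 : ℝ) < (3 / 4 : ℝ) ^ d := by positivity
    have hk1 : (1 : ℝ) ≤ 2 * k - 1 := by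
      have : (1 : ℝ) ≤ (k : ℝ) := by exact_mod_cast Nat.one_le_iff_ne_zero.mpr (by omega)
      linarith
    have h1 : (2 * (k : ℝ) - 1) * (aa (k - 1) * ((2 * (n - k : ℕ) + 1) * aa (n - k))) ≤
        (2 * (k : ℝ) - 1) * ((2 * r + 1) * aa r * aa (n - (r + 1)) * (3 / 4) ^ d) :=
      mul_le_mul_of_nonneg_left IH (by linarith)
    have h2 : (2 * (k : ℝ) - 1) * ((2 * r + 1) * aa r * aa (n - (r + 1)) * (3 / 4) ^ d) ≤
        (9 / 16) * ((2 * (n - k : ℕ) + 1) * (2 * (n - (r + 1) : ℕ) + 1)) *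
          (aa r * aa (n - (r + 1)) * (3 / 4) ^ d) := by
      have hm := mul_le_mul_of_nonneg_right pair
        (mul_pos (mul_pos pP pQ) pX).le
      linarith [hm]
    have h3 := h1.trans h2
    have hpos : (0 : ℝ) < 2 * ((n - k : ℕ) : ℝ) + 1 := by positivity
    rw [show ((3 : ℝ) / 4) ^ (d + 2) = (3 / 4) ^ d * (9 / 16) by ring]
    have h4 : (2 * ((n - k : ℕ) : ℝ) + 1) * ((2 * (k : ℝ) - 1) * aa (k - 1) * aa (n - k)) ≤
        (2 * ((n - k : ℕ) : ℝ) + 1) *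
          (aa r * ((2 * ((n - (r + 1) : ℕ) : ℝ) + 1) * aa (n - (r + 1))) *
            ((3 / 4) ^ d * (9 / 16))) := by linarith [h3]
    exact le_of_mul_le_mul_left h4 hpos

lemma geo (N : ℕ) : ∑ i ∈ Finset.range N, (3 / 4 : ℝ) ^ i ≤ 4 := by
  rw [geom_sum_eq (by norm_num : (3 / 4 : ℝ) ≠ 1)]
  have h : (0 : ℝ) ≤ (3 / 4 : ℝ) ^ N := by positivity
  rw [div_le_iff_of_neg (by norm_num : (3 / 4 : ℝ) - 1 < 0)]
  linarith

lemma g1 (r M : ℕ) : ∑ k ∈ Finset.Icc r M, (3 / 4 : ℝ) ^ (k - r) ≤ 4 := by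
  rw [← Finset.Ico_add_one_right_eq_Icc, Finset.sum_Ico_eq_sum_range]
  calc ∑ i ∈ Finset.range (M + 1 - r), (3 / 4 : ℝ) ^ (r + i - r)
      = ∑ i ∈ Finset.range (M + 1 - r), (3 / 4 : ℝ) ^ i := by
        apply Finset.sum_congr rfl; intro i _; congr 1; omega
    _ ≤ 4 := geo _

lemma g2 (r n : ℕ) : ∑ k ∈ Finset.Icc r (n - r), (3 / 4 : ℝ) ^ (n - k - r) ≤ 4 := by
  by_cases hn : 2 * r ≤ n
  · rw [← Finset.Ico_add_one_right_eq_Icc, Finset.sum_Ico_eq_sum_range]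
    set N := n - r + 1 - r with hN
    calc ∑ i ∈ Finset.range N, (3 / 4 : ℝ) ^ (n - (r + i) - r)
        = ∑ i ∈ Finset.range N, (3 / 4 : ℝ) ^ (N - 1 - i) := by
          apply Finset.sum_congr rfl; intro i hi
          rw [Finset.mem_range] at hi
          congr 1; omega
      _ = ∑ i ∈ Finset.range N, (3 / 4 : ℝ) ^ i := by
          exact Finset.sum_range_reflect (fun i => (3 / 4 : ℝ) ^ i) N
      _ ≤ 4 := geo _
  · have : Finset.Icc r (n - r) = ∅ := by
      rw [Finset.Icc_eq_empty_iff]; omega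
    rw [this]; norm_num

lemma part1 : Tendsto (fun n => aa (n - 1) / aa n) atTop (nhds 0) := by
  apply squeeze_zero' (g := fun n : ℕ => (1 : ℝ) / n)
  · filter_upwards with n
    exact le_of_lt (div_pos (aa_pos _) (aa_pos _))
  · filter_upwards [eventually_ge_atTop 1] with n hn
    have hs : aa n = (2 * ((n - 1 : ℕ) : ℝ) + 1) * aa (n - 1) := by
      conv_lhs => rw [show n = (n - 1) + 1 from by omega]
      exact aa_succ _
    have hp := aa_pos (n - 1)
    have hnp : (0 : ℝ) < (n : ℝ) := by exact_mod_cast hn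
    rw [div_le_div_iff₀ (aa_pos n) hnp, hs]
    have hcast : (n : ℝ) ≤ 2 * ((n - 1 : ℕ) : ℝ) + 1 := by
      have : ((n - 1 : ℕ) : ℝ) = (n : ℝ) - 1 := by
        rw [Nat.cast_sub hn]; push_cast; ring
      rw [this]
      have : (1 : ℝ) ≤ (n : ℝ) := by exact_mod_cast hn
      linarith
    nlinarith [mul_le_mul_of_nonneg_right hcast hp.le]
  · exact tendsto_one_div_atTop_nhds_zero_nat

lemma part2 (r : ℕ) (_ : 1 ≤ r) :
    (fun n => ∑ k ∈ Finset.Icc r (n - r), |aa k * aa (n - k)|) =O[atTop]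
      fun n => aa (n - r) := by
  rw [isBigO_iff]
  refine ⟨aa r * 8, ?_⟩
  filter_upwards [eventually_ge_atTop (10 * r + 7)] with n hn
  have hpr := aa_pos r
  have hpnr := aa_pos (n - r)
  have hterm : ∀ k ∈ Finset.Icc r (n - r),
      |aa k * aa (n - k)| ≤ aa r * aa (n - r) * ((3 / 4 : ℝ) ^ (k - r) + (3 / 4 : ℝ) ^ (n - k - r)) := by
    intro k hk
    rw [Finset.mem_Icc] at hk
    rw [abs_of_pos (mul_pos (aa_pos _) (aa_pos _))]
    have hA : (0 : ℝ) < (3 / 4 : ℝ) ^ (k - r) := by positivity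
    have hB : (0 : ℝ) < (3 / 4 : ℝ) ^ (n - k - r) := by positivity
    by_cases hc : 2 * k ≤ n
    · have hkey := key (k - r) n r k (by omega) (by omega)
      nlinarith [mul_pos (mul_pos hpr hpnr) hB]
    · have hkey := key (n - k - r) n r (n - k) (by omega) (by omega)
      rw [show n - (n - k) = k from by omega] at hkey
      nlinarith [mul_pos (mul_pos hpr hpnr) hA]
  have hsum := Finset.sum_le_sum hterm
  have hsplit : ∑ k ∈ Finset.Icc r (n - r),
      aa r * aa (n - r) * ((3 / 4 : ℝ) ^ (k - r) + (3 / 4 : ℝ) ^ (n - k - r))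
      = aa r * aa (n - r) *
        ((∑ k ∈ Finset.Icc r (n - r), (3 / 4 : ℝ) ^ (k - r)) +
          ∑ k ∈ Finset.Icc r (n - r), (3 / 4 : ℝ) ^ (n - k - r)) := by
    rw [mul_add, Finset.mul_sum, Finset.mul_sum, ← Finset.sum_add_distrib]
    apply Finset.sum_congr rfl
    intro k _; ring
  have hgeo : (∑ k ∈ Finset.Icc r (n - r), (3 / 4 : ℝ) ^ (k - r)) +
      (∑ k ∈ Finset.Icc r (n - r), (3 / 4 : ℝ) ^ (n - k - r)) ≤ 8 := by
    have := g1 r (n - r); have := g2 r n; linarith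
  have hsum2 : ∑ k ∈ Finset.Icc r (n - r), |aa k * aa (n - k)| ≤ aa r * aa (n - r) * 8 := by
    rw [hsplit] at hsum
    calc ∑ k ∈ Finset.Icc r (n - r), |aa k * aa (n - k)| ≤ _ := hsum
      _ ≤ aa r * aa (n - r) * 8 := by
        apply mul_le_mul_of_nonneg_left hgeo (by positivity)
  rw [Real.norm_eq_abs, Real.norm_eq_abs, abs_of_nonneg
    (Finset.sum_nonneg fun k _ => abs_nonneg _), abs_of_pos hpnr]
  linarith [hsum2]

/-- the sequence `(2n-1)!!` (with `(-1)!! = 1`) is gargantuan. -/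
theorem double_factorial_gargantuan :
    Gargantuan fun n => (Nat.doubleFactorial (2 * n - 1) : ℝ) := by
  exact ⟨part1, part2⟩
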